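/- Assume Condition (C) holds with witness X_S. Then the sequences (A^(k), B^(k), Q^(k)) are well defined (in particular Q^(1) − B^(k) is positive definite for every k), and for every k ≥ 1: Q ≥ Q^(k) ≥ Q^(k+1) ≥ X_S > B^(k+1) ≥ B^(k) ≥ 0 in the Loewner order. Moreover, for every k ≥ 1, Q^(k) ≥ Q − A^H f(Q^(k))^{-1} A. -/

import Mathlib

open Matrix Filter Topology
open scoped ComplexOrder

noncomputable section

/-- Square complex matrices of size `n`. -/
abbrev Mat (n : ℕ) := Matrix (Fin n) (Fin n) ℂ

/-- An operator `f` on complex `n × n` matrices is *admissible* if it satisfies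
(a1) `f (f X) = X`, (a2) additivity, (a3) multiplicativity, and
(a4) `f X` is positive semidefinite whenever `X` is. -/
def Admissible {n : ℕ} (f : Mat n → Mat n) : Prop :=
  (∀ X, f (f X) = X) ∧
  (∀ X Y, f (X + Y) = f X + f Y) ∧
  (∀ X Y, f (X * Y) = f X * f Y) ∧
  (∀ X, X.PosSemidef → (f X).PosSemidef)

/-- The general recursion of the paper: with constant matrices `(Ac, Bc, Qc)` and
initial triple `init = (A⁽¹⁾, B⁽¹⁾, Q⁽¹⁾)`, step
`(A, B, Q) ↦ (Ac (Qc - B)⁻¹ A, Bc + Ac (Qc - B)⁻¹ Acᴴ, Q - Aᴴ (Qc - B)⁻¹ A)`.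
Index `k : ℕ` corresponds to the paper's index `k + 1`. -/
def nmeIter {n : ℕ} (Ac Bc Qc : Mat n) (init : Mat n × Mat n × Mat n) :
    ℕ → Mat n × Mat n × Mat n
  | 0 => init
  | k + 1 =>
    let p := nmeIter Ac Bc Qc init k
    (Ac * (Qc - p.2.1)⁻¹ * p.1,
     Bc + Ac * (Qc - p.2.1)⁻¹ * Acᴴ,
     p.2.2 - p.1ᴴ * (Qc - p.2.1)⁻¹ * p.1)

/-- The sequence `(A⁽ᵏ⁾, B⁽ᵏ⁾, Q⁽ᵏ⁾)` (indexed from `0`, so `plusSeq f A Q k` is the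
paper's `(A^{(k+1)}, B^{(k+1)}, Q^{(k+1)})`) for the plus-sign equation
`X + Aᴴ f(X)⁻¹ A = Q`. -/
def plusSeq {n : ℕ} (f : Mat n → Mat n) (A Q : Mat n) : ℕ → Mat n × Mat n × Mat n :=
  nmeIter (f A * (f Q)⁻¹ * A) (f A * (f Q)⁻¹ * (f A)ᴴ) (Q - Aᴴ * (f Q)⁻¹ * A)
    (f A * (f Q)⁻¹ * A, f A * (f Q)⁻¹ * (f A)ᴴ, Q - Aᴴ * (f Q)⁻¹ * A)

/-- `As f A Q k` is the paper's `A^{(k+1)}`. -/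
def As {n : ℕ} (f : Mat n → Mat n) (A Q : Mat n) (k : ℕ) : Mat n := (plusSeq f A Q k).1
/-- `Bs f A Q k` is the paper's `B^{(k+1)}`. -/
def Bs {n : ℕ} (f : Mat n → Mat n) (A Q : Mat n) (k : ℕ) : Mat n := (plusSeq f A Q k).2.1
/-- `Qs f A Q k` is the paper's `Q^{(k+1)}`. -/
def Qs {n : ℕ} (f : Mat n → Mat n) (A Q : Mat n) (k : ℕ) : Mat n := (plusSeq f A Q k).2.2

namespace NMEAux

variable {n : ℕ}

lemma pd_isUnit_det {M : Mat n} (h : M.PosDef) : IsUnit M.det := h.det_pos.ne'.isUnit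

lemma posDef_of_posSemidef_isUnit {M : Mat n} (h : M.PosSemidef) (hd : IsUnit M.det) :
    M.PosDef := by
  refine posDef_iff_dotProduct_mulVec.mpr ⟨h.1, fun x hx => ?_⟩
  rcases ((posSemidef_iff_dotProduct_mulVec.mp h).2 x).lt_or_eq with h1 | h1
  · exact h1
  · exfalso
    have h0 : M *ᵥ x = 0 := (h.dotProduct_mulVec_zero_iff x).mp h1.symm
    have hx0 : x = 0 := by
      have h2 := congrArg (fun v => M⁻¹ *ᵥ v) h0
      simpa [Matrix.mulVec_mulVec, Matrix.nonsing_inv_mul _ hd] using h2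
    exact hx hx0

lemma posDef_add_of_posSemidef {X Y : Mat n} (hX : X.PosSemidef) (hY : Y.PosDef) :
    (X + Y).PosDef := Matrix.PosDef.posSemidef_add hX hY

/-- inverse is antitone on positive definite matrices -/
lemma inv_sub_inv_posSemidef {X Y : Mat n} (hX : X.PosDef) (hY : Y.PosDef)
    (h : (Y - X).PosSemidef) : (X⁻¹ - Y⁻¹).PosSemidef := by
  have hXd : IsUnit X.det := pd_isUnit_det hX
  have hYd : IsUnit Y.det := pd_isUnit_det hY
  have e1 : (Y - X) + (Y - X) * X⁻¹ * (Y - X) = Y * X⁻¹ * Y - Y := by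
    simp only [sub_mul, mul_sub, Matrix.mul_nonsing_inv _ hXd,
      Matrix.nonsing_inv_mul_cancel_right _ _ hXd, one_mul, mul_one]
    abel
  have e2 : Y * (X⁻¹ - Y⁻¹) * Y = Y * X⁻¹ * Y - Y := by
    simp only [mul_sub, sub_mul, Matrix.mul_nonsing_inv _ hYd,
      Matrix.nonsing_inv_mul_cancel_right _ _ hYd, one_mul, mul_one]
  have key : X⁻¹ - Y⁻¹ = Y⁻¹ * ((Y - X) + (Y - X) * X⁻¹ * (Y - X)) * Y⁻¹ := by
    rw [e1, ← e2]
    rw [show Y⁻¹ * (Y * (X⁻¹ - Y⁻¹) * Y) * Y⁻¹ = (Y⁻¹ * Y) * (X⁻¹ - Y⁻¹) * (Y * Y⁻¹) by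
      simp only [mul_assoc]]
    rw [Matrix.nonsing_inv_mul _ hYd, Matrix.mul_nonsing_inv _ hYd, one_mul, mul_one]
  have hinner : ((Y - X) + (Y - X) * X⁻¹ * (Y - X)).PosSemidef := by
    refine h.add ?_
    have h2 := hX.inv.posSemidef.conjTranspose_mul_mul_same (Y - X)
    rwa [h.1] at h2
  have h3 := hinner.conjTranspose_mul_mul_same (Y⁻¹)
  rwa [hY.inv.isHermitian, ← key] at h3

/-- Woodbury-type identity. -/
lemma woodbury {L D B : Mat n} (hL : IsUnit L.det) (hD : IsUnit D.det)
    (hS : IsUnit (D - Bᴴ * L⁻¹ * B).det) :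
    (L - B * D⁻¹ * Bᴴ)⁻¹ = L⁻¹ + L⁻¹ * B * (D - Bᴴ * L⁻¹ * B)⁻¹ * Bᴴ * L⁻¹ := by
  apply Matrix.inv_eq_right_inv
  set S := D - Bᴴ * L⁻¹ * B with hSdef
  have cL : ∀ W : Mat n, L * (L⁻¹ * W) = W := fun W => by
    rw [← mul_assoc, Matrix.mul_nonsing_inv _ hL, one_mul]
  have cD : ∀ W : Mat n, D⁻¹ * (D * W) = W := fun W => by
    rw [← mul_assoc, Matrix.nonsing_inv_mul _ hD, one_mul]
  have cS : ∀ W : Mat n, S * (S⁻¹ * W) = W := fun W => by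
    rw [← mul_assoc, Matrix.mul_nonsing_inv _ hS, one_mul]
  have hBLB : ∀ W : Mat n, Bᴴ * (L⁻¹ * (B * W)) = D * W - S * W := fun W => by
    rw [show Bᴴ * (L⁻¹ * (B * W)) = (Bᴴ * L⁻¹ * B) * W by simp only [mul_assoc],
      show Bᴴ * L⁻¹ * B = D - S by rw [hSdef]; abel, sub_mul]
  have e2 : L * (L⁻¹ * B * S⁻¹ * Bᴴ * L⁻¹) = B * (S⁻¹ * (Bᴴ * L⁻¹)) := by
    simp only [mul_assoc]; rw [cL]
  have e3 : B * D⁻¹ * Bᴴ * L⁻¹ = B * (D⁻¹ * (Bᴴ * L⁻¹)) := by simp only [mul_assoc]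
  have e4 : B * D⁻¹ * Bᴴ * (L⁻¹ * B * S⁻¹ * Bᴴ * L⁻¹)
      = B * (S⁻¹ * (Bᴴ * L⁻¹)) - B * (D⁻¹ * (Bᴴ * L⁻¹)) := by
    rw [show B * D⁻¹ * Bᴴ * (L⁻¹ * B * S⁻¹ * Bᴴ * L⁻¹)
        = B * (D⁻¹ * (Bᴴ * (L⁻¹ * (B * (S⁻¹ * (Bᴴ * L⁻¹)))))) by simp only [mul_assoc]]
    rw [hBLB (S⁻¹ * (Bᴴ * L⁻¹)), mul_sub, cD, cS, mul_sub]
  rw [sub_mul, mul_add, mul_add, Matrix.mul_nonsing_inv _ hL, e2, e3, e4]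
  abel

lemma schur_pd {X S B : Mat n} (hX : X.PosDef) (hS : S.PosDef)
    (h : (S - Bᴴ * X⁻¹ * B).PosDef) : (X - B * S⁻¹ * Bᴴ).PosDef := by
  haveI := hX.isUnit.invertible
  haveI := hS.isUnit.invertible
  have hpsd1 : (fromBlocks X B Bᴴ S).PosSemidef :=
    (Matrix.PosDef.fromBlocks₁₁ B S hX).mpr h.posSemidef
  have hpsd2 : (X - B * S⁻¹ * Bᴴ).PosSemidef :=
    (Matrix.PosDef.fromBlocks₂₂ X B hS).mp hpsd1
  refine posDef_of_posSemidef_isUnit hpsd2 ?_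
  have h1 : (fromBlocks X B Bᴴ S).det = X.det * (S - Bᴴ * X⁻¹ * B).det := by
    rw [Matrix.det_fromBlocks₁₁, Matrix.invOf_eq_nonsing_inv]
  have h2 : (fromBlocks X B Bᴴ S).det = S.det * (X - B * S⁻¹ * Bᴴ).det := by
    rw [Matrix.det_fromBlocks₂₂, Matrix.invOf_eq_nonsing_inv]
  have h3 : IsUnit (S.det * (X - B * S⁻¹ * Bᴴ).det) := by
    rw [← h2, h1]; exact (pd_isUnit_det hX).mul (pd_isUnit_det h)
  exact isUnit_of_mul_isUnit_right h3

lemma herm_decomp {M : Mat n} (hM : M.IsHermitian) :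
    ∃ P N : Mat n, P.PosSemidef ∧ N.PosSemidef ∧ M = P - N := by
  classical
  set U : Mat n := (hM.eigenvectorUnitary : Mat n) with hU
  refine ⟨U * diagonal (fun i => ((max (hM.eigenvalues i) 0 : ℝ) : ℂ)) * Uᴴ,
    U * diagonal (fun i => ((max (-hM.eigenvalues i) 0 : ℝ) : ℂ)) * Uᴴ, ?_, ?_, ?_⟩
  · exact (posSemidef_diagonal_iff.mpr fun i =>
      Complex.zero_le_real.mpr (le_max_right _ _)).mul_mul_conjTranspose_same U
  · exact (posSemidef_diagonal_iff.mpr fun i =>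
      Complex.zero_le_real.mpr (le_max_right _ _)).mul_mul_conjTranspose_same U
  · have hd : diagonal (fun i => ((max (hM.eigenvalues i) 0 : ℝ) : ℂ))
        - diagonal (fun i => ((max (-hM.eigenvalues i) 0 : ℝ) : ℂ))
        = diagonal (RCLike.ofReal ∘ hM.eigenvalues) := by
      ext i j
      rcases eq_or_ne i j with rfl | hij
      · simp only [Matrix.sub_apply, Matrix.diagonal_apply_eq, Function.comp_apply]
        rw [← Complex.ofReal_sub, max_zero_sub_max_neg_zero_eq_self]
        rfl
      · simp [Matrix.sub_apply, Matrix.diagonal_apply_ne _ hij]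
    rw [← sub_mul, ← mul_sub, hd]
    have h2 := hM.spectral_theorem
    rw [Unitary.conjStarAlgAut_apply, Matrix.star_eq_conjTranspose] at h2
    exact h2


section FProps
variable {f : Mat n → Mat n} (hf : Admissible f)
include hf

lemma f_zero : f 0 = 0 := by
  have h := hf.2.1 0 0
  simp only [add_zero] at h
  simpa using h.symm

lemma f_sub (X Y : Mat n) : f (X - Y) = f X - f Y := by
  have h := hf.2.1 (X - Y) Y
  rw [sub_add_cancel] at h
  exact eq_sub_of_add_eq h.symm

lemma f_neg (X : Mat n) : f (-X) = - f X := by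
  have h := f_sub hf 0 X
  rw [zero_sub, f_zero hf, zero_sub] at h
  exact h

lemma f_one : f 1 = 1 := by
  have key : ∀ Z : Mat n, f 1 * Z = Z := by
    intro Z
    conv_lhs => rw [← hf.1 Z]
    rw [← hf.2.2.1, one_mul]
    exact hf.1 Z
  have h := key 1
  rwa [mul_one] at h

lemma f_mul_inv_self {X : Mat n} (h : IsUnit X.det) : f X * f X⁻¹ = 1 := by
  rw [← hf.2.2.1, Matrix.mul_nonsing_inv _ h, f_one hf]

lemma f_isUnit_det {X : Mat n} (h : IsUnit X.det) : IsUnit (f X).det := by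
  have h1 := congrArg Matrix.det (f_mul_inv_self hf h)
  rw [Matrix.det_mul, Matrix.det_one] at h1
  exact IsUnit.of_mul_eq_one _ h1

lemma f_inv {X : Mat n} (h : IsUnit X.det) : f X⁻¹ = (f X)⁻¹ :=
  (Matrix.inv_eq_right_inv (f_mul_inv_self hf h)).symm

lemma f_posDef {X : Mat n} (h : X.PosDef) : (f X).PosDef :=
  posDef_of_posSemidef_isUnit (hf.2.2.2 _ h.posSemidef) (f_isUnit_det hf (pd_isUnit_det h))

lemma f_psd_sub {X Y : Mat n} (h : (X - Y).PosSemidef) : (f X - f Y).PosSemidef := by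
  rw [← f_sub hf]; exact hf.2.2.2 _ h

lemma f_hermitian {X : Mat n} (hX : X.IsHermitian) : (f X).IsHermitian := by
  obtain ⟨P, N, hP, hN, rfl⟩ := herm_decomp hX
  rw [f_sub hf]
  exact ((hf.2.2.2 _ hP).isHermitian).sub ((hf.2.2.2 _ hN).isHermitian)

lemma f_conjT (X : Mat n) : f (Xᴴ) = (f X)ᴴ := by
  rcases Nat.eq_zero_or_pos n with h0 | hn
  · subst h0
    apply Matrix.ext
    intro i _
    exact i.elim0
  -- the scalar J = f(i•1)
  have hcomm : ∀ Z : Mat n, Commute Z (f (Complex.I • 1)) := by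
    intro Z
    have h1 : f (Complex.I • 1) * Z = Z * f (Complex.I • 1) := by
      conv_lhs => rw [← hf.1 Z]
      conv_rhs => rw [← hf.1 Z]
      rw [← hf.2.2.1, ← hf.2.2.1, smul_mul_assoc, one_mul, mul_smul_comm, mul_one]
    exact h1.symm
  obtain ⟨r, hr⟩ := Matrix.mem_range_scalar_of_commute_single
    (fun i j _ => hcomm (Matrix.single i j 1))
  have hscal : f (Complex.I • 1) = r • (1 : Mat n) := by
    rw [← hr, Matrix.scalar_apply, Matrix.smul_one_eq_diagonal]
  have hJJ : f (Complex.I • 1) * f (Complex.I • 1) = -1 := by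
    rw [← hf.2.2.1]
    have e : (Complex.I • (1 : Mat n)) * (Complex.I • 1) = -1 := by
      rw [smul_mul_assoc, mul_smul_comm, one_mul, smul_smul, Complex.I_mul_I, neg_smul, one_smul]
    rw [e, f_neg hf, f_one hf]
  have hr2 : r * r = -1 := by
    rw [hscal, smul_mul_assoc, mul_smul_comm, one_mul, smul_smul] at hJJ
    have i0 : Fin n := ⟨0, hn⟩
    have h3 := congrFun (congrFun hJJ i0) i0
    simpa [Matrix.smul_apply, Matrix.one_apply, Matrix.neg_apply] using h3
  have hstar : (starRingEnd ℂ) r = -r := by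
    have hz : (r - Complex.I) * (r + Complex.I) = 0 := by
      linear_combination hr2 - Complex.I_mul_I
    rcases mul_eq_zero.mp hz with h | h
    · rw [sub_eq_zero.mp h, Complex.conj_I]
    · rw [eq_neg_of_add_eq_zero_left h]
      simp [Complex.conj_I]
  -- decomposition X = Hm + (i•1) * Km with Hm Km hermitian
  set Hm := (2⁻¹ : ℂ) • (X + Xᴴ) with hHm
  set Km := (2⁻¹ : ℂ) • (Complex.I • (Xᴴ - X)) with hKm
  have hHmh : Hm.IsHermitian := by
    rw [hHm]
    unfold Matrix.IsHermitian
    rw [Matrix.conjTranspose_smul, Matrix.conjTranspose_add, Matrix.conjTranspose_conjTranspose]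
    rw [show star (2⁻¹ : ℂ) = (2⁻¹ : ℂ) by simp]
    rw [add_comm]
  have hKmh : Km.IsHermitian := by
    rw [hKm]
    unfold Matrix.IsHermitian
    rw [Matrix.conjTranspose_smul, Matrix.conjTranspose_smul, Matrix.conjTranspose_sub,
      Matrix.conjTranspose_conjTranspose]
    rw [show star (2⁻¹ : ℂ) = (2⁻¹ : ℂ) by simp,
      show star Complex.I = -Complex.I by simp]
    rw [neg_smul, smul_sub, smul_sub, neg_sub]
  have hXdec : X = Hm + (Complex.I • (1 : Mat n)) * Km := by
    rw [hHm, hKm, smul_mul_assoc, one_mul, smul_comm Complex.I (2⁻¹:ℂ),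
      smul_smul Complex.I Complex.I, Complex.I_mul_I, neg_one_smul, ← smul_add,
      show (X + Xᴴ) + -(Xᴴ - X) = X + X by abel, ← two_smul ℂ X, smul_smul]
    norm_num
  have hXHdec : Xᴴ = Hm - (Complex.I • (1 : Mat n)) * Km := by
    rw [hHm, hKm, smul_mul_assoc, one_mul, smul_comm Complex.I (2⁻¹:ℂ),
      smul_smul Complex.I Complex.I, Complex.I_mul_I, neg_one_smul, ← smul_sub,
      show (X + Xᴴ) - -(Xᴴ - X) = Xᴴ + Xᴴ by abel, ← two_smul ℂ (Xᴴ), smul_smul]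
    norm_num
  have h4 : f X = f Hm + r • f Km := by
    conv_lhs => rw [hXdec]
    rw [hf.2.1, hf.2.2.1, hscal, smul_mul_assoc, one_mul]
  have h5 : f (Xᴴ) = f Hm - r • f Km := by
    conv_lhs => rw [hXHdec]
    rw [f_sub hf, hf.2.2.1, hscal, smul_mul_assoc, one_mul]
  rw [h4, h5, Matrix.conjTranspose_add, Matrix.conjTranspose_smul,
    f_hermitian hf hHmh, f_hermitian hf hKmh]
  rw [show star r = -r from hstar, neg_smul, ← sub_eq_add_neg]


end FProps
end NMEAux

/-- one step of the fixed-point map `X ↦ Q - Aᴴ f(X)⁻¹ A`. -/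
def gstep {n : ℕ} (f : Mat n → Mat n) (A Q X : Mat n) : Mat n := Q - Aᴴ * (f X)⁻¹ * A

/-- odd iterates of the fixed-point map starting from `Q`. -/
def useq {n : ℕ} (f : Mat n → Mat n) (A Q : Mat n) : ℕ → Mat n
  | 0 => gstep f A Q Q
  | k + 1 => gstep f A Q (gstep f A Q (useq f A Q k))

/-- under Condition (C) with witness `XS`, the sequences for the plus-sign
equation are well defined (`Q^{(1)} - B^{(k)}` is positive definite for all `k`), the chain
`Q ≥ Q^{(k)} ≥ Q^{(k+1)} ≥ X_S > B^{(k+1)} ≥ B^{(k)} ≥ 0` holds, and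
`Q^{(k)} ≥ Q - Aᴴ f(Q^{(k)})⁻¹ A`.  (Indices here are the paper's shifted by one.) -/
theorem stmt_4 {n : ℕ} (f : Mat n → Mat n) (hf : Admissible f)
    (A Q XS : Mat n) (hQ : Q.PosDef)
    (hXS : XS.PosDef) (hXSle : (Q - Aᴴ * (f XS)⁻¹ * A - XS).PosSemidef) :
    (∀ k, (Qs f A Q 0 - Bs f A Q k).PosDef) ∧
    (∀ k, (Q - Qs f A Q k).PosSemidef ∧
      (Qs f A Q k - Qs f A Q (k + 1)).PosSemidef ∧
      (Qs f A Q (k + 1) - XS).PosSemidef ∧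
      (XS - Bs f A Q (k + 1)).PosDef ∧
      (Bs f A Q (k + 1) - Bs f A Q k).PosSemidef ∧
      (Bs f A Q k).PosSemidef) ∧
    (∀ k, (Qs f A Q k - (Q - Aᴴ * (f (Qs f A Q k))⁻¹ * A)).PosSemidef) := by
  classical
  have fQpd : (f Q).PosDef := NMEAux.f_posDef hf hQ
  have fXSpd : (f XS).PosDef := NMEAux.f_posDef hf hXS
  -- definitional unfoldings of the sequences
  have hQs0 : Qs f A Q 0 = Q - Aᴴ * (f Q)⁻¹ * A := rfl
  have hBs0 : Bs f A Q 0 = f A * (f Q)⁻¹ * (f A)ᴴ := rfl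
  have hAs0 : As f A Q 0 = f A * (f Q)⁻¹ * A := rfl
  have hAsucc : ∀ k, As f A Q (k+1)
      = As f A Q 0 * (Qs f A Q 0 - Bs f A Q k)⁻¹ * As f A Q k := fun _ => rfl
  have hBsucc : ∀ k, Bs f A Q (k+1)
      = Bs f A Q 0 + As f A Q 0 * (Qs f A Q 0 - Bs f A Q k)⁻¹ * (As f A Q 0)ᴴ := fun _ => rfl
  have hQsucc : ∀ k, Qs f A Q (k+1)
      = Qs f A Q k - (As f A Q k)ᴴ * (Qs f A Q 0 - Bs f A Q k)⁻¹ * As f A Q k := fun _ => rfl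
  have hu0 : useq f A Q 0 = gstep f A Q Q := rfl
  have husucc : ∀ k, useq f A Q (k+1) = gstep f A Q (gstep f A Q (useq f A Q k)) := fun _ => rfl
  have hαH : (As f A Q 0)ᴴ = Aᴴ * (f Q)⁻¹ * (f A)ᴴ := by
    rw [hAs0, conjTranspose_mul, conjTranspose_mul, fQpd.inv.isHermitian, ← mul_assoc]
  -- consequences of condition (C)
  have hAfXSA : (Aᴴ * (f XS)⁻¹ * A).PosSemidef :=
    fXSpd.inv.posSemidef.conjTranspose_mul_mul_same A
  have hQXS : (Q - XS).PosSemidef := by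
    have h := hXSle.add hAfXSA
    rwa [show Q - Aᴴ * (f XS)⁻¹ * A - XS + Aᴴ * (f XS)⁻¹ * A = Q - XS from by abel] at h
  have hfXSQ : (f Q - f XS).PosSemidef := NMEAux.f_psd_sub hf hQXS
  have hfC : (f Q - f XS - (f A)ᴴ * XS⁻¹ * f A).PosSemidef := by
    have h := hf.2.2.2 _ hXSle
    have e : f (Q - Aᴴ * (f XS)⁻¹ * A - XS) = f Q - (f A)ᴴ * XS⁻¹ * f A - f XS := by
      rw [NMEAux.f_sub hf, NMEAux.f_sub hf, hf.2.2.1, hf.2.2.1, NMEAux.f_conjT hf,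
        NMEAux.f_inv hf (NMEAux.pd_isUnit_det fXSpd), hf.1]
    rw [e] at h
    rwa [show f Q - (f A)ᴴ * XS⁻¹ * f A - f XS
      = f Q - f XS - (f A)ᴴ * XS⁻¹ * f A from by abel] at h
  have hfQXSpd : (f Q - (f A)ᴴ * XS⁻¹ * f A).PosDef := by
    have h := NMEAux.posDef_add_of_posSemidef hfC fXSpd
    rwa [show f Q - f XS - (f A)ᴴ * XS⁻¹ * f A + f XS
      = f Q - (f A)ᴴ * XS⁻¹ * f A from by abel] at h
  have hXN : (XS - Bs f A Q 0).PosDef := by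
    rw [hBs0]; exact NMEAux.schur_pd hXS fQpd hfQXSpd
  -- basic properties of the fixed-point map
  have hg_le_Q : ∀ X : Mat n, X.PosDef → (Q - gstep f A Q X).PosSemidef := by
    intro X hX
    have h : (Aᴴ * (f X)⁻¹ * A).PosSemidef :=
      (NMEAux.f_posDef hf hX).inv.posSemidef.conjTranspose_mul_mul_same A
    rw [show Q - gstep f A Q X = Aᴴ * (f X)⁻¹ * A from by unfold gstep; abel]
    exact h
  have hg_mono : ∀ X Y : Mat n, X.PosDef → Y.PosDef → (X - Y).PosSemidef →
      (gstep f A Q X - gstep f A Q Y).PosSemidef := by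
    intro X Y hX hY h
    have h2 := (NMEAux.inv_sub_inv_posSemidef (NMEAux.f_posDef hf hY) (NMEAux.f_posDef hf hX)
      (NMEAux.f_psd_sub hf h)).conjTranspose_mul_mul_same A
    rw [show gstep f A Q X - gstep f A Q Y = Aᴴ * ((f Y)⁻¹ - (f X)⁻¹) * A from by
      unfold gstep; rw [mul_sub, sub_mul]; abel]
    exact h2
  have hg_XS : ∀ X : Mat n, X.PosDef → (X - XS).PosSemidef →
      (gstep f A Q X - XS).PosSemidef ∧ (gstep f A Q X).PosDef := by
    intro X hX hXXS
    have h1 : (gstep f A Q X - gstep f A Q XS).PosSemidef := hg_mono X XS hX hXS hXXS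
    have h2 : (gstep f A Q XS - XS).PosSemidef := by unfold gstep; exact hXSle
    have h3 : (gstep f A Q X - XS).PosSemidef := by
      have h4 := h1.add h2
      rwa [sub_add_sub_cancel] at h4
    refine ⟨h3, ?_⟩
    have h5 := NMEAux.posDef_add_of_posSemidef h3 hXS
    rwa [sub_add_cancel] at h5
  -- the chain of odd fixed-point iterates
  have upack : ∀ k, (useq f A Q k).PosDef ∧ (useq f A Q k - XS).PosSemidef ∧
      (Q - useq f A Q k).PosSemidef ∧
      (useq f A Q k - gstep f A Q (useq f A Q k)).PosSemidef := by
    intro k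
    induction k with
    | zero =>
      obtain ⟨h2, h1⟩ := hg_XS Q hQ hQXS
      rw [← hu0] at h1 h2
      have h3 : (Q - useq f A Q 0).PosSemidef := by rw [hu0]; exact hg_le_Q Q hQ
      refine ⟨h1, h2, h3, ?_⟩
      have h4 := hg_mono Q (useq f A Q 0) hQ h1 h3
      rwa [← hu0] at h4
    | succ k ih =>
      obtain ⟨hupd, huXS, hQu, hugu⟩ := ih
      obtain ⟨hvXS, hvpd⟩ := hg_XS (useq f A Q k) hupd huXS
      obtain ⟨h1XS, h1pd⟩ := hg_XS (gstep f A Q (useq f A Q k)) hvpd hvXS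
      rw [← husucc] at h1XS h1pd
      have hQu1 : (Q - useq f A Q (k+1)).PosSemidef := by
        rw [husucc]; exact hg_le_Q _ hvpd
      refine ⟨h1pd, h1XS, hQu1, ?_⟩
      have hvu1 : (gstep f A Q (useq f A Q k) - useq f A Q (k+1)).PosSemidef := by
        rw [husucc]; exact hg_mono _ _ hupd hvpd hugu
      have h5 := hg_mono _ _ hvpd h1pd hvu1
      rwa [← husucc] at h5
  have humono : ∀ k, (useq f A Q k - useq f A Q (k+1)).PosSemidef := by
    intro k
    obtain ⟨hupd, huXS, _, hugu⟩ := upack k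
    obtain ⟨hvXS, hvpd⟩ := hg_XS (useq f A Q k) hupd huXS
    have hvu1 : (gstep f A Q (useq f A Q k) - useq f A Q (k+1)).PosSemidef := by
      rw [husucc]; exact hg_mono _ _ hupd hvpd hugu
    have h := hugu.add hvu1
    rwa [sub_add_sub_cancel] at h
  -- the B chain
  have hQs0XS : (Qs f A Q 0 - XS).PosSemidef := by
    have h2 : (Aᴴ * ((f XS)⁻¹ - (f Q)⁻¹) * A).PosSemidef :=
      (NMEAux.inv_sub_inv_posSemidef fXSpd fQpd hfXSQ).conjTranspose_mul_mul_same A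
    have h := hXSle.add h2
    rwa [show Q - Aᴴ * (f XS)⁻¹ * A - XS + Aᴴ * ((f XS)⁻¹ - (f Q)⁻¹) * A
      = Qs f A Q 0 - XS from by rw [hQs0, mul_sub, sub_mul]; abel] at h
  have hLpd : ∀ k, (XS - Bs f A Q k).PosDef → (Qs f A Q 0 - Bs f A Q k).PosDef := by
    intro k h
    have h2 := NMEAux.posDef_add_of_posSemidef hQs0XS h
    rwa [sub_add_sub_cancel] at h2
  have hBpack : ∀ k, (Bs f A Q k).PosSemidef ∧ (XS - Bs f A Q k).PosDef ∧
      (Bs f A Q (k+1) - Bs f A Q k).PosSemidef := by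
    have key : ∀ k, (Bs f A Q k).PosSemidef → (XS - Bs f A Q k).PosDef →
        (Bs f A Q (k+1)).PosSemidef ∧ (XS - Bs f A Q (k+1)).PosDef := by
      intro k hBpsd hXB
      have hLk : (Qs f A Q 0 - Bs f A Q k).PosDef := hLpd k hXB
      have hWpd : (Q - Bs f A Q k).PosDef := by
        have h := NMEAux.posDef_add_of_posSemidef hQXS hXB
        rwa [sub_add_sub_cancel] at h
      have hWX : (Q - Bs f A Q k - Aᴴ * (f XS)⁻¹ * A).PosDef := by
        have h := NMEAux.posDef_add_of_posSemidef hXSle hXB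
        rwa [show Q - Aᴴ * (f XS)⁻¹ * A - XS + (XS - Bs f A Q k)
          = Q - Bs f A Q k - Aᴴ * (f XS)⁻¹ * A from by abel] at h
      have h2 : (f XS - A * (Q - Bs f A Q k)⁻¹ * Aᴴ).PosDef :=
        NMEAux.schur_pd fXSpd hWpd hWX
      have hy1 : (f Q - A * (Q - Bs f A Q k)⁻¹ * Aᴴ - (f A)ᴴ * XS⁻¹ * f A).PosDef := by
        have h := NMEAux.posDef_add_of_posSemidef hfC h2
        rwa [show f Q - f XS - (f A)ᴴ * XS⁻¹ * f A + (f XS - A * (Q - Bs f A Q k)⁻¹ * Aᴴ)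
          = f Q - A * (Q - Bs f A Q k)⁻¹ * Aᴴ - (f A)ᴴ * XS⁻¹ * f A from by abel] at h
      have hypd : (f Q - A * (Q - Bs f A Q k)⁻¹ * Aᴴ).PosDef := by
        have h := NMEAux.posDef_add_of_posSemidef
          (hXS.inv.posSemidef.conjTranspose_mul_mul_same (f A)) hy1
        rwa [show (f A)ᴴ * XS⁻¹ * f A
            + (f Q - A * (Q - Bs f A Q k)⁻¹ * Aᴴ - (f A)ᴴ * XS⁻¹ * f A)
          = f Q - A * (Q - Bs f A Q k)⁻¹ * Aᴴ from by abel] at h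
      have hMeq : Q - Bs f A Q k - Aᴴ * (f Q)⁻¹ * A = Qs f A Q 0 - Bs f A Q k := by
        rw [hQs0]; abel
      have hwood : (f Q - A * (Q - Bs f A Q k)⁻¹ * Aᴴ)⁻¹
          = (f Q)⁻¹ + (f Q)⁻¹ * A * (Qs f A Q 0 - Bs f A Q k)⁻¹ * Aᴴ * (f Q)⁻¹ := by
        have h := NMEAux.woodbury (L := f Q) (D := Q - Bs f A Q k) (B := A)
          (NMEAux.pd_isUnit_det fQpd) (NMEAux.pd_isUnit_det hWpd)
          (by rw [hMeq]; exact NMEAux.pd_isUnit_det hLk)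
        rwa [hMeq] at h
      have hBs1 : Bs f A Q (k+1) = f A * (f Q - A * (Q - Bs f A Q k)⁻¹ * Aᴴ)⁻¹ * (f A)ᴴ := by
        rw [hwood, hBsucc k, hαH, hBs0, hAs0]
        simp only [mul_add, add_mul, mul_assoc]
      constructor
      · rw [hBs1]
        exact hypd.inv.posSemidef.mul_mul_conjTranspose_same (f A)
      · rw [hBs1]
        exact NMEAux.schur_pd hXS hypd hy1
    intro k
    induction k with
    | zero =>
      have hB0psd : (Bs f A Q 0).PosSemidef := by
        rw [hBs0]; exact fQpd.inv.posSemidef.mul_mul_conjTranspose_same (f A)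
      refine ⟨hB0psd, hXN, ?_⟩
      have h2 : (As f A Q 0 * (Qs f A Q 0 - Bs f A Q 0)⁻¹ * (As f A Q 0)ᴴ).PosSemidef :=
        (hLpd 0 hXN).inv.posSemidef.mul_mul_conjTranspose_same (As f A Q 0)
      rwa [← show Bs f A Q 1 - Bs f A Q 0
        = As f A Q 0 * (Qs f A Q 0 - Bs f A Q 0)⁻¹ * (As f A Q 0)ᴴ from by
          rw [hBsucc 0]; abel] at h2
    | succ k ih =>
      obtain ⟨hBpsd, hXB, hmono⟩ := ih
      obtain ⟨hBpsd1, hXB1⟩ := key k hBpsd hXB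
      refine ⟨hBpsd1, hXB1, ?_⟩
      have hLk := hLpd k hXB
      have hLk1 := hLpd (k+1) hXB1
      have hdiff : ((Qs f A Q 0 - Bs f A Q (k+1))⁻¹ - (Qs f A Q 0 - Bs f A Q k)⁻¹).PosSemidef := by
        refine NMEAux.inv_sub_inv_posSemidef hLk1 hLk ?_
        rwa [show Qs f A Q 0 - Bs f A Q k - (Qs f A Q 0 - Bs f A Q (k+1))
          = Bs f A Q (k+1) - Bs f A Q k from by abel]
      have h2 := hdiff.mul_mul_conjTranspose_same (As f A Q 0)
      rwa [← show Bs f A Q (k+2) - Bs f A Q (k+1)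
        = As f A Q 0 * ((Qs f A Q 0 - Bs f A Q (k+1))⁻¹ - (Qs f A Q 0 - Bs f A Q k)⁻¹)
            * (As f A Q 0)ᴴ from by
          rw [hBsucc (k+1), hBsucc k, mul_sub, sub_mul]; abel] at h2
  have hXBpd : ∀ k, (XS - Bs f A Q k).PosDef := fun k => (hBpack k).2.1
  have hLall : ∀ k, (Qs f A Q 0 - Bs f A Q k).PosDef := fun k => hLpd k (hXBpd k)
  -- the Woodbury identity for the double fixed-point step
  have hWG : ∀ X : Mat n, X.PosDef → (X - XS).PosSemidef →
      gstep f A Q (gstep f A Q X)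
        = Qs f A Q 0 - (As f A Q 0)ᴴ * (X - Bs f A Q 0)⁻¹ * As f A Q 0 := by
    intro X hXpd hXXS
    have hXN0 : (X - Bs f A Q 0).PosDef := by
      have h := NMEAux.posDef_add_of_posSemidef hXXS hXN
      rwa [sub_add_sub_cancel] at h
    have hfg : f (gstep f A Q X) = f Q - (f A)ᴴ * X⁻¹ * f A := by
      unfold gstep
      rw [NMEAux.f_sub hf, hf.2.2.1, hf.2.2.1, NMEAux.f_conjT hf,
        NMEAux.f_inv hf (NMEAux.pd_isUnit_det (NMEAux.f_posDef hf hXpd)), hf.1]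
    have hw := NMEAux.woodbury (L := f Q) (D := X) (B := (f A)ᴴ)
      (NMEAux.pd_isUnit_det fQpd) (NMEAux.pd_isUnit_det hXpd)
      (by rw [conjTranspose_conjTranspose, ← hBs0]; exact NMEAux.pd_isUnit_det hXN0)
    rw [conjTranspose_conjTranspose, ← hBs0] at hw
    show Q - Aᴴ * (f (gstep f A Q X))⁻¹ * A = _
    rw [hfg, hw, hQs0, hαH, hAs0]
    simp only [mul_add, add_mul, mul_assoc]
    abel
  -- positive definiteness of useq j - Bs m
  have huBs : ∀ j m, (useq f A Q j - Bs f A Q m).PosDef := by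
    intro j m
    have h := NMEAux.posDef_add_of_posSemidef (upack j).2.1 (hXBpd m)
    rwa [sub_add_sub_cancel] at h
  -- one step of the Schur-complement exchange
  have hCstep : ∀ m (D : Mat n), D.PosDef →
      (D - As f A Q 0 * (Qs f A Q 0 - Bs f A Q m)⁻¹ * (As f A Q 0)ᴴ).PosDef →
      Qs f A Q (m+1) - (As f A Q (m+1))ᴴ
          * (D - As f A Q 0 * (Qs f A Q 0 - Bs f A Q m)⁻¹ * (As f A Q 0)ᴴ)⁻¹ * As f A Q (m+1)
        = Qs f A Q m - (As f A Q m)ᴴ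
          * ((Qs f A Q 0 - Bs f A Q m) - (As f A Q 0)ᴴ * D⁻¹ * As f A Q 0)⁻¹ * As f A Q m := by
    intro m D hD hD2
    have hLm := hLall m
    have hw := NMEAux.woodbury (L := Qs f A Q 0 - Bs f A Q m) (D := D) (B := (As f A Q 0)ᴴ)
      (NMEAux.pd_isUnit_det hLm) (NMEAux.pd_isUnit_det hD)
      (by rw [conjTranspose_conjTranspose]; exact NMEAux.pd_isUnit_det hD2)
    rw [conjTranspose_conjTranspose] at hw
    have hAsH : (As f A Q (m+1))ᴴ
        = (As f A Q m)ᴴ * (Qs f A Q 0 - Bs f A Q m)⁻¹ * (As f A Q 0)ᴴ := by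
      rw [hAsucc m, conjTranspose_mul, conjTranspose_mul, hLm.inv.isHermitian, ← mul_assoc]
    rw [hQsucc m, hAsH, hAsucc m, hw]
    simp only [mul_add, add_mul, mul_assoc]
    abel
  -- telescoping: the Q chain equals the odd fixed-point iterates
  have hTel : ∀ j m, Qs f A Q (j + m + 1)
      = Qs f A Q m - (As f A Q m)ᴴ * (useq f A Q j - Bs f A Q m)⁻¹ * As f A Q m := by
    intro j
    induction j with
    | zero =>
      intro m
      rw [Nat.zero_add, hQsucc m]
      rfl
    | succ j ih =>
      intro m
      have e1 : j + 1 + m + 1 = j + (m + 1) + 1 := by omega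
      rw [e1, ih (m+1)]
      have hD2e : useq f A Q j - Bs f A Q 0
            - As f A Q 0 * (Qs f A Q 0 - Bs f A Q m)⁻¹ * (As f A Q 0)ᴴ
          = useq f A Q j - Bs f A Q (m+1) := by
        rw [hBsucc m]; abel
      have hstep := hCstep m (useq f A Q j - Bs f A Q 0) (huBs j 0)
        (by rw [hD2e]; exact huBs j (m+1))
      rw [hD2e] at hstep
      rw [hstep]
      have e3 : useq f A Q (j+1)
          = Qs f A Q 0 - (As f A Q 0)ᴴ * (useq f A Q j - Bs f A Q 0)⁻¹ * As f A Q 0 := by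
        rw [husucc j]
        exact hWG (useq f A Q j) (upack j).1 (upack j).2.1
      have e4 : Qs f A Q 0 - Bs f A Q m - (As f A Q 0)ᴴ * (useq f A Q j - Bs f A Q 0)⁻¹ * As f A Q 0
          = useq f A Q (j+1) - Bs f A Q m := by
        rw [e3]; abel
      rw [e4]
  have hQs_eq : ∀ k, Qs f A Q k = useq f A Q k := by
    intro k
    cases k with
    | zero => rfl
    | succ k =>
      have h1 := hTel k 0
      rw [Nat.add_zero] at h1
      rw [h1]
      have e3 : useq f A Q (k+1)
          = Qs f A Q 0 - (As f A Q 0)ᴴ * (useq f A Q k - Bs f A Q 0)⁻¹ * As f A Q 0 := by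
        rw [husucc k]
        exact hWG (useq f A Q k) (upack k).1 (upack k).2.1
      rw [e3]
  -- assemble the final statement
  refine ⟨hLall, ?_, ?_⟩
  · intro k
    obtain ⟨hBpsd, _, hBmono⟩ := hBpack k
    refine ⟨?_, ?_, ?_, hXBpd (k+1), hBmono, hBpsd⟩
    · rw [hQs_eq k]; exact (upack k).2.2.1
    · rw [hQs_eq k, hQs_eq (k+1)]; exact humono k
    · rw [hQs_eq (k+1)]; exact (upack (k+1)).2.1
  · intro k
    rw [hQs_eq k]
    have h := (upack k).2.2.2
    rwa [show gstep f A Q (useq f A Q k) = Q - Aᴴ * (f (useq f A Q k))⁻¹ * A from rfl] at h
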